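/- arXiv:2412.16845 — 4 statements merged into one kernel-verified Lean document; each statement's English description precedes it below -/
import Mathlib

section
/- Let U : ℝ³ × ℝ → ℝ⁸ be differentiable and let F : ℝ⁸ → ℝ^{8×3} be a linear map. Define f_k(x,t) := g_k(U(x,t)) where g_k(V) := V/4 + (1/(4λ²c²)) F(V) v_k with the D3Q4 velocities v_k. Then at every point (x,t), Σ_{k=0}^{3} ( ∂_t f_k + (v_k · ∇_x) f_k ) = ∂_t U + Σ_{j=1}^{3} ∂_{x_j} ( F(U) e_j ); that is, in the local-equilibrium limit the discrete-velocity kinetic transport recovers the macroscopic conservation law ∂_t U + ∇ · F(U) = 0 whenever the left-hand side vanishes. -/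
/-- The D3Q4 discrete kinetic velocities. -/
def d3q4 (lam c : ℝ) : Fin 4 → Fin 3 → ℝ :=
  ![![lam * c, lam * c, lam * c],
    ![lam * c, -(lam * c), -(lam * c)],
    ![-(lam * c), lam * c, -(lam * c)],
    ![-(lam * c), -(lam * c), lam * c]]

/-- Multiplying `F ·` by a fixed vector, as a continuous linear map. -/
noncomputable def mulVecF (F : (Fin 8 → ℝ) →ₗ[ℝ] Matrix (Fin 8) (Fin 3) ℝ) (v : Fin 3 → ℝ) :
    (Fin 8 → ℝ) →L[ℝ] (Fin 8 → ℝ) :=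
  LinearMap.toContinuousLinearMap
    { toFun := fun W => (F W).mulVec v
      map_add' := fun x y => by simp [Matrix.add_mulVec]
      map_smul' := fun r x => by simp [Matrix.smul_mulVec] }

/-- In the local-equilibrium limit, the sum over the D3Q4 beams of the kinetic transport
terms `∂_t f_k + (v_k · ∇_x) f_k` equals `∂_t U + Σ_j ∂_{x_j} (F(U) e_j)`, i.e. the
discrete-velocity kinetic model recovers the macroscopic conservation law
`∂_t U + ∇·F(U) = 0` whenever the kinetic transport terms vanish. -/
theorem d3q4_equilibrium_transport_recovers_conservation_law
    (lam c : ℝ) (hlam : 0 < lam) (hc : 0 < c)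
    (U : (Fin 3 → ℝ) × ℝ → (Fin 8 → ℝ)) (hU : Differentiable ℝ U)
    (F : (Fin 8 → ℝ) →ₗ[ℝ] Matrix (Fin 8) (Fin 3) ℝ)
    (f : Fin 4 → ((Fin 3 → ℝ) × ℝ) → (Fin 8 → ℝ))
    (hf : ∀ k p, f k p = (1 / 4 : ℝ) • U p +
      (1 / (4 * lam ^ 2 * c ^ 2)) • (F (U p)).mulVec (d3q4 lam c k)) :
    ∀ p : (Fin 3 → ℝ) × ℝ,
      (∑ k : Fin 4,
        (fderiv ℝ (f k) p ((0 : Fin 3 → ℝ), (1 : ℝ)) +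
         fderiv ℝ (f k) p (d3q4 lam c k, (0 : ℝ)))) =
      fderiv ℝ U p ((0 : Fin 3 → ℝ), (1 : ℝ)) +
        ∑ j : Fin 3,
          fderiv ℝ (fun q => (F (U q)).mulVec (Pi.single j (1 : ℝ))) p
            (Pi.single j (1 : ℝ), (0 : ℝ)) := by
  intro p
  have hlam' : (lam : ℝ) ≠ 0 := hlam.ne'
  have hc' : (c : ℝ) ≠ 0 := hc.ne'
  set s : ℝ := 1 / (4 * lam ^ 2 * c ^ 2) with hs
  set D : ((Fin 3 → ℝ) × ℝ) →L[ℝ] (Fin 8 → ℝ) := fderiv ℝ U p with hDdef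
  have hD : ∀ v : Fin 3 → ℝ,
      HasFDerivAt (fun q => (F (U q)).mulVec v) ((mulVecF F v).comp D) p :=
    fun v => (mulVecF F v).hasFDerivAt.comp p (hU p).hasFDerivAt
  have hfd : ∀ k, fderiv ℝ (f k) p =
      (1 / 4 : ℝ) • D + s • ((mulVecF F (d3q4 lam c k)).comp D) := by
    intro k
    have hfun : f k = fun q => (1 / 4 : ℝ) • U q +
        s • (fun q' => (F (U q')).mulVec (d3q4 lam c k)) q := funext fun q => hf k q
    rw [hfun]
    exact (((hU p).hasFDerivAt.const_smul (1 / 4 : ℝ)).add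
      ((hD (d3q4 lam c k)).const_smul s)).fderiv
  have hfdj : ∀ j : Fin 3,
      fderiv ℝ (fun q => (F (U q)).mulVec (Pi.single j (1 : ℝ))) p =
      (mulVecF F (Pi.single j (1 : ℝ))).comp D :=
    fun j => (hD (Pi.single j (1 : ℝ))).fderiv
  simp only [hfd, hfdj]
  -- decompose D (v, 0)
  set a : Fin 3 → (Fin 8 → ℝ) := fun j => D (Pi.single j 1, 0) with ha
  have hv : ∀ v : Fin 3 → ℝ, ((v, (0 : ℝ)) : (Fin 3 → ℝ) × ℝ) =
      v 0 • ((Pi.single 0 1 : Fin 3 → ℝ), (0 : ℝ)) +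
      v 1 • ((Pi.single 1 1 : Fin 3 → ℝ), (0 : ℝ)) +
      v 2 • ((Pi.single 2 1 : Fin 3 → ℝ), (0 : ℝ)) := by
    intro v
    refine Prod.ext ?_ (by simp)
    funext j
    fin_cases j <;> simp [Pi.single_apply]
  have hDv : ∀ v : Fin 3 → ℝ, D (v, 0) = v 0 • a 0 + v 1 • a 1 + v 2 • a 2 := by
    intro v; rw [hv v, map_add, map_add, map_smul, map_smul, map_smul]
  have hd00 : d3q4 lam c 0 0 = lam * c := rfl
  have hd01 : d3q4 lam c 0 1 = lam * c := rfl
  have hd02 : d3q4 lam c 0 2 = lam * c := rfl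
  have hd10 : d3q4 lam c 1 0 = lam * c := rfl
  have hd11 : d3q4 lam c 1 1 = -(lam * c) := rfl
  have hd12 : d3q4 lam c 1 2 = -(lam * c) := rfl
  have hd20 : d3q4 lam c 2 0 = -(lam * c) := rfl
  have hd21 : d3q4 lam c 2 1 = lam * c := rfl
  have hd22 : d3q4 lam c 2 2 = -(lam * c) := rfl
  have hd30 : d3q4 lam c 3 0 = -(lam * c) := rfl
  have hd31 : d3q4 lam c 3 1 = -(lam * c) := rfl
  have hd32 : d3q4 lam c 3 2 = lam * c := rfl
  funext i
  simp only [ContinuousLinearMap.add_apply, ContinuousLinearMap.coe_smul',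
    ContinuousLinearMap.comp_apply, Pi.smul_apply, Pi.add_apply, Finset.sum_apply,
    Fin.sum_univ_four, Fin.sum_univ_three, mulVecF, LinearMap.coe_toContinuousLinearMap',
    LinearMap.coe_mk, AddHom.coe_mk, Matrix.mulVec, dotProduct, hDv,
    hd00, hd01, hd02, hd10, hd11, hd12, hd20, hd21, hd22, hd30, hd31, hd32,
    map_add, map_smul, Matrix.add_apply, Matrix.smul_apply, smul_eq_mul,
    Pi.single_apply, Fin.isValue]
  simp only [Fin.reduceEq, if_true, if_false, ite_true, ite_false, reduceIte, mul_one, mul_zero,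
    add_zero, zero_add, one_mul]
  have h1 : lam ^ 2 * c ^ 2 * lam⁻¹ ^ 2 * c⁻¹ ^ 2 = 1 := by
    field_simp
  ring_nf
  field_simp
  try ring_nf
  try simp only [h1, one_mul]
  have hs4 : s * lam ^ 2 * c ^ 2 * 4 = 1 := by rw [hs]; field_simp
  linear_combination (F (a 0) i 0 + F (a 1) i 1 + F (a 2) i 2) * hs4
end

section
/- Let f : ℤ × ℤ → ℝ be a grid function, let v_x, v_y, Δt, Δx, Δy be positive reals with v_x Δt = Δx and v_y Δt = Δy. Define the transverse-corrected interface states f*ˣ_{i,j} := f_{i,j} + (v_y Δt / (2Δy)) (f_{i,j−1} − f_{i,j}) and f*ʸ_{i,j} := f_{i,j} + (v_x Δt / (2Δx)) (f_{i−1,j} − f_{i,j}), the numerical fluxes 𝓕_{i+1/2,j} := v_x f*ˣ_{i,j} and 𝓖_{i,j+1/2} := v_y f*ʸ_{i,j}, and the corner-transport-upwind update f^{new}_{i,j} := f_{i,j} − (Δt/Δx)(𝓕_{i+1/2,j} − 𝓕_{i−1/2,j}) − (Δt/Δy)(𝓖_{i,j+1/2} − 𝓖_{i,j−1/2}). Then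 f^{new}_{i,j} = f_{i−1,j−1} for all (i,j); that is, at unit Courant number the Beam-CTU update coincides with the exact transport (shift) solution of ∂_t f + v·∇f = 0. -/
/-- At unit Courant number (`v_x Δt = Δx`, `v_y Δt = Δy`), the corner transport upwind
(Beam-CTU) update coincides with the exact transport (shift) solution:
`f^{new}_{i,j} = f_{i−1,j−1}`. -/
theorem ctu_unit_courant_is_exact_transport
    (f : ℤ × ℤ → ℝ) (vx vy Δt Δx Δy : ℝ)
    (hvx : 0 < vx) (hvy : 0 < vy) (hΔt : 0 < Δt) (hΔx : 0 < Δx) (hΔy : 0 < Δy)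
    (hcx : vx * Δt = Δx) (hcy : vy * Δt = Δy)
    (fstarx fstary Fflux Gflux fnew : ℤ × ℤ → ℝ)
    (hfsx : ∀ i j : ℤ, fstarx (i, j) =
      f (i, j) + (vy * Δt / (2 * Δy)) * (f (i, j - 1) - f (i, j)))
    (hfsy : ∀ i j : ℤ, fstary (i, j) =
      f (i, j) + (vx * Δt / (2 * Δx)) * (f (i - 1, j) - f (i, j)))
    (hF : ∀ i j : ℤ, Fflux (i, j) = vx * fstarx (i, j))
    (hG : ∀ i j : ℤ, Gflux (i, j) = vy * fstary (i, j))
    (hnew : ∀ i j : ℤ, fnew (i, j) =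
      f (i, j) - (Δt / Δx) * (Fflux (i, j) - Fflux (i - 1, j))
               - (Δt / Δy) * (Gflux (i, j) - Gflux (i, j - 1))) :
    ∀ i j : ℤ, fnew (i, j) = f (i - 1, j - 1) := by
  intro i j
  subst hcx hcy
  rw [hnew, hF, hF, hG, hG, hfsx, hfsx, hfsy, hfsy]
  field_simp
  ring
end

section
/- Let c, χ, γ be real numbers and let A₁ be the 8×8 real matrix (acting on U = (E_x, E_y, E_z, B_x, B_y, B_z, φ, ψ)) whose only nonzero entries are A₁[1,7] = c²χ, A₁[2,6] = c², A₁[3,5] = −c², A₁[4,8] = γ, A₁[5,3] = −1, A₁[6,2] = 1, A₁[7,1] = χ, A₁[8,4] = c²γ (rows and columns indexed from 1). Then the characteristic polynomial of A₁ is (X² − c²)² (X² − χ²c²) (X² − γ²c²); moreover, if c > 0, χ > 0, and γ > 0, then A₁ is diagonalizable over ℝ, so the one-dimensional PHM system is strictly hyperbolic with wave speeds ±c (each of multiplicity two), ±χc, and ±γc. -/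
open Polynomial

set_option maxHeartbeats 4000000
set_option maxRecDepth 100000

@[simp] lemma cons_val_five' {α : Type*} {m : ℕ} (x : α) (u : Fin (m+5) → α) :
    Matrix.vecCons x u 5 =
      Matrix.vecHead (Matrix.vecTail (Matrix.vecTail (Matrix.vecTail (Matrix.vecTail u)))) := rfl

@[simp] lemma cons_val_six' {α : Type*} {m : ℕ} (x : α) (u : Fin (m+6) → α) :
    Matrix.vecCons x u 6 =
      Matrix.vecHead (Matrix.vecTail (Matrix.vecTail (Matrix.vecTail (Matrix.vecTail
        (Matrix.vecTail u))))) := rfl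

@[simp] lemma cons_val_seven' {α : Type*} {m : ℕ} (x : α) (u : Fin (m+7) → α) :
    Matrix.vecCons x u 7 =
      Matrix.vecHead (Matrix.vecTail (Matrix.vecTail (Matrix.vecTail (Matrix.vecTail
        (Matrix.vecTail (Matrix.vecTail u)))))) := rfl

/-- The flux Jacobian of the one-dimensional PHM system in the `x`-direction. -/
def phmA1 (c χ γ : ℝ) : Matrix (Fin 8) (Fin 8) ℝ :=
  !![0, 0, 0, 0, 0, 0, c ^ 2 * χ, 0;
     0, 0, 0, 0, 0, c ^ 2, 0, 0;
     0, 0, 0, 0, -(c ^ 2), 0, 0, 0;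
     0, 0, 0, 0, 0, 0, 0, γ;
     0, 0, -1, 0, 0, 0, 0, 0;
     0, 1, 0, 0, 0, 0, 0, 0;
     χ, 0, 0, 0, 0, 0, 0, 0;
     0, 0, 0, c ^ 2 * γ, 0, 0, 0, 0]

/-- The four 2×2 blocks of the PHM flux Jacobian. -/
def phmBlk (c χ γ : ℝ) : Fin 4 → Matrix (Fin 2) (Fin 2) ℝ :=
  ![!![0, c ^ 2 * χ; χ, 0],
    !![0, c ^ 2; 1, 0],
    !![0, -(c ^ 2); -1, 0],
    !![0, γ; c ^ 2 * γ, 0]]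

/-- The reindexing that turns the block-diagonal form into `phmA1`. -/
def phmEquiv : Fin 2 × Fin 4 ≃ Fin 8 where
  toFun p := ![![0, 1, 2, 3], ![6, 5, 4, 7]] p.1 p.2
  invFun i := ![(0, 0), (0, 1), (0, 2), (0, 3), (1, 2), (1, 1), (1, 0), (1, 3)] i
  left_inv := by decide
  right_inv := by decide

lemma charmatrix_blockDiagonal' {R : Type*} [CommRing R] {o m : Type*}
    [DecidableEq o] [DecidableEq m] [Fintype o] [Fintype m] (M : o → Matrix m m R) :
    Matrix.charmatrix (Matrix.blockDiagonal M) =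
      Matrix.blockDiagonal (fun k => Matrix.charmatrix (M k)) := by
  ext ⟨i, k⟩ ⟨j, l⟩
  rcases eq_or_ne k l with rfl | hkl
  · rcases eq_or_ne i j with rfl | hij
    · simp [Matrix.blockDiagonal_apply]
    · have h : ((i, k) : m × o) ≠ (j, k) := by simp [Prod.ext_iff, hij]
      simp [Matrix.blockDiagonal_apply, Matrix.charmatrix_apply_ne _ _ _ h,
        Matrix.charmatrix_apply_ne _ _ _ hij]
  · have h : ((i, k) : m × o) ≠ (j, l) := by simp [Prod.ext_iff, hkl]
    simp [Matrix.blockDiagonal_apply, Matrix.charmatrix_apply_ne _ _ _ h, hkl]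

lemma charpoly_blockDiagonal' {R : Type*} [CommRing R] {o m : Type*}
    [DecidableEq o] [DecidableEq m] [Fintype o] [Fintype m] (M : o → Matrix m m R) :
    (Matrix.blockDiagonal M).charpoly = ∏ k, (M k).charpoly := by
  rw [Matrix.charpoly, charmatrix_blockDiagonal', Matrix.det_blockDiagonal]
  rfl

lemma charpoly_anti_diag (a b : ℝ) :
    (!![0, a; b, 0] : Matrix (Fin 2) (Fin 2) ℝ).charpoly = X ^ 2 - C (a * b) := by
  rw [Matrix.charpoly, Matrix.det_fin_two]
  simp [Matrix.charmatrix_apply_eq, Matrix.charmatrix_apply_ne]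
  ring

lemma phmA1_eq_reindex (c χ γ : ℝ) :
    Matrix.reindex phmEquiv phmEquiv (Matrix.blockDiagonal (phmBlk c χ γ)) = phmA1 c χ γ := by
  ext i j
  fin_cases i <;> fin_cases j <;>
    simp [Matrix.blockDiagonal_apply, phmEquiv, phmBlk, phmA1,
      Matrix.vecHead, Matrix.vecTail]

/-- The characteristic polynomial of the 1-D PHM flux Jacobian is
`(X² − c²)² (X² − χ²c²) (X² − γ²c²)`, and for positive `c, χ, γ` the matrix is
diagonalizable over `ℝ`: the PHM system is strictly hyperbolic with wave speeds
`±c` (multiplicity two), `±χc` and `±γc`. -/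
theorem phmA1_charpoly_and_diagonalizable (c χ γ : ℝ) :
    (phmA1 c χ γ).charpoly =
      (X ^ 2 - C (c ^ 2)) ^ 2 * (X ^ 2 - C (χ ^ 2 * c ^ 2)) *
        (X ^ 2 - C (γ ^ 2 * c ^ 2)) ∧
    (0 < c → 0 < χ → 0 < γ →
      ∃ (P : Matrix (Fin 8) (Fin 8) ℝ) (d : Fin 8 → ℝ),
        IsUnit P.det ∧ phmA1 c χ γ = P * Matrix.diagonal d * P⁻¹) := by
  constructor
  · rw [← phmA1_eq_reindex, Matrix.charpoly_reindex, charpoly_blockDiagonal']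
    have h0 : (phmBlk c χ γ 0).charpoly = X ^ 2 - C (χ ^ 2 * c ^ 2) := by
      rw [show phmBlk c χ γ 0 = !![0, c ^ 2 * χ; χ, 0] from rfl, charpoly_anti_diag,
        show c ^ 2 * χ * χ = χ ^ 2 * c ^ 2 by ring]
    have h1 : (phmBlk c χ γ 1).charpoly = X ^ 2 - C (c ^ 2) := by
      rw [show phmBlk c χ γ 1 = !![0, c ^ 2; 1, 0] from rfl, charpoly_anti_diag, mul_one]
    have h2 : (phmBlk c χ γ 2).charpoly = X ^ 2 - C (c ^ 2) := by
      rw [show phmBlk c χ γ 2 = !![0, -(c ^ 2); -1, 0] from rfl, charpoly_anti_diag,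
        show -(c ^ 2) * -1 = c ^ 2 by ring]
    have h3 : (phmBlk c χ γ 3).charpoly = X ^ 2 - C (γ ^ 2 * c ^ 2) := by
      rw [show phmBlk c χ γ 3 = !![0, γ; c ^ 2 * γ, 0] from rfl, charpoly_anti_diag,
        show γ * (c ^ 2 * γ) = γ ^ 2 * c ^ 2 by ring]
    rw [Fin.prod_univ_four, h0, h1, h2, h3]
    ring
  · intro hc hχ hγ
    have hc0 : c ≠ 0 := ne_of_gt hc
    set P : Matrix (Fin 8) (Fin 8) ℝ :=
      !![c, c, 0, 0, 0, 0, 0, 0;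
         0, 0, c, c, 0, 0, 0, 0;
         0, 0, 0, 0, c, c, 0, 0;
         0, 0, 0, 0, 0, 0, 1, 1;
         0, 0, 0, 0, -1, 1, 0, 0;
         0, 0, 1, -1, 0, 0, 0, 0;
         1, -1, 0, 0, 0, 0, 0, 0;
         0, 0, 0, 0, 0, 0, c, -c] with hP
    set Q : Matrix (Fin 8) (Fin 8) ℝ :=
      !![1/(2*c), 0, 0, 0, 0, 0, 1/2, 0;
         1/(2*c), 0, 0, 0, 0, 0, -(1/2), 0;
         0, 1/(2*c), 0, 0, 0, 1/2, 0, 0;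
         0, 1/(2*c), 0, 0, 0, -(1/2), 0, 0;
         0, 0, 1/(2*c), 0, -(1/2), 0, 0, 0;
         0, 0, 1/(2*c), 0, 1/2, 0, 0, 0;
         0, 0, 0, 1/2, 0, 0, 0, 1/(2*c);
         0, 0, 0, 1/2, 0, 0, 0, -(1/(2*c))] with hQ
    set d : Fin 8 → ℝ := ![c*χ, -(c*χ), c, -c, c, -c, c*γ, -(c*γ)] with hd
    have hPQ : P * Q = 1 := by
      ext i j
      fin_cases i <;> fin_cases j <;>
        (simp [hP, hQ, Matrix.mul_apply, Fin.sum_univ_succ, Matrix.one_apply, Matrix.vecHead, Matrix.vecTail]) <;> (try field_simp) <;> (try ring)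
    have hdet : IsUnit P.det := Matrix.isUnit_det_of_right_inverse hPQ
    have hAP : phmA1 c χ γ * P = P * Matrix.diagonal d := by
      ext i j
      fin_cases i <;> fin_cases j <;>
        (simp [hP, hd, phmA1, Matrix.mul_apply, Fin.sum_univ_succ, Matrix.diagonal, Matrix.vecHead, Matrix.vecTail]) <;> (try ring)
    refine ⟨P, d, hdet, ?_⟩
    calc phmA1 c χ γ = phmA1 c χ γ * (P * P⁻¹) := by
          rw [Matrix.mul_nonsing_inv P hdet, Matrix.mul_one]
      _ = (phmA1 c χ γ * P) * P⁻¹ := by rw [Matrix.mul_assoc]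
      _ = P * Matrix.diagonal d * P⁻¹ := by rw [hAP]
end

section
/- Let ε₀, c, χ > 0, let E, B : ℝ × ℝ³ → ℝ³ and φ : ℝ × ℝ³ → ℝ be twice continuously differentiable, and let ρ : ℝ × ℝ³ → ℝ, J : ℝ × ℝ³ → ℝ³ be continuously differentiable, satisfying the PHM equations ∂_t E = c² ∇ × B − χ c² ∇φ − J/ε₀ and (1/χ) ∂_t φ = ρ/ε₀ − div E. Then the correction potential φ satisfies the inhomogeneous wave equation ∂_{tt} φ − χ² c² Δφ = (χ/ε₀) ( ∂_t ρ + div J ); in particular, inconsistencies between the charge and current distributions act as the source of waves in φ that propagate at speed χc, and if charge conservation ∂_t ρ + div J = 0 holds then φ satisfies the homogeneous wave equation with speed χc. -/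
/-- Spatial partial derivative `∂_{x_j} F_i` of a time-dependent vector field. -/
noncomputable def spd (F : ℝ × (Fin 3 → ℝ) → Fin 3 → ℝ) (j : Fin 3)
    (t : ℝ) (x : Fin 3 → ℝ) (i : Fin 3) : ℝ :=
  fderiv ℝ (fun y => F (t, y) i) x (Pi.single j 1)

/-- Spatial divergence of a time-dependent vector field. -/
noncomputable def sdiv (F : ℝ × (Fin 3 → ℝ) → Fin 3 → ℝ) (t : ℝ) (x : Fin 3 → ℝ) : ℝ :=
  ∑ j : Fin 3, spd F j t x j

/-- Spatial curl of a time-dependent vector field. -/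
noncomputable def scurl (F : ℝ × (Fin 3 → ℝ) → Fin 3 → ℝ) (t : ℝ) (x : Fin 3 → ℝ) :
    Fin 3 → ℝ :=
  ![spd F 1 t x 2 - spd F 2 t x 1,
    spd F 2 t x 0 - spd F 0 t x 2,
    spd F 0 t x 1 - spd F 1 t x 0]

/-- Spatial gradient of a time-dependent scalar field. -/
noncomputable def sgrad (φ : ℝ × (Fin 3 → ℝ) → ℝ) (t : ℝ) (x : Fin 3 → ℝ)
    (i : Fin 3) : ℝ :=
  fderiv ℝ (fun y => φ (t, y)) x (Pi.single i 1)

/-- Spatial Laplacian of a time-dependent scalar field. -/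
noncomputable def slap (φ : ℝ × (Fin 3 → ℝ) → ℝ) (t : ℝ) (x : Fin 3 → ℝ) : ℝ :=
  ∑ j : Fin 3, fderiv ℝ (fun y => sgrad φ t y j) x (Pi.single j 1)

noncomputable section PHMhelp
variable {f : ℝ × (Fin 3 → ℝ) → ℝ} {t : ℝ} {x : Fin 3 → ℝ}

lemma tslice_hasDerivAt (hf : DifferentiableAt ℝ f (t, x)) :
    HasDerivAt (fun s => f (s, x)) (fderiv ℝ f (t, x) (1, 0)) t := by
  have h : HasDerivAt (fun s : ℝ => (s, x)) ((1 : ℝ), (0 : Fin 3 → ℝ)) t :=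
    (hasDerivAt_id t).prodMk (hasDerivAt_const t x)
  exact hf.hasFDerivAt.comp_hasDerivAt t h

lemma tslice_diff (hf : DifferentiableAt ℝ f (t, x)) :
    DifferentiableAt ℝ (fun s => f (s, x)) t := (tslice_hasDerivAt hf).differentiableAt

lemma tslice_deriv (hf : DifferentiableAt ℝ f (t, x)) :
    deriv (fun s => f (s, x)) t = fderiv ℝ f (t, x) (1, 0) := (tslice_hasDerivAt hf).deriv

lemma xslice_hasFDerivAt (hf : DifferentiableAt ℝ f (t, x)) :
    HasFDerivAt (fun y => f (t, y))
      ((fderiv ℝ f (t, x)).comp (ContinuousLinearMap.inr ℝ ℝ (Fin 3 → ℝ))) x := by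
  have h : HasFDerivAt (fun y : Fin 3 → ℝ => (t, y)) (ContinuousLinearMap.inr ℝ ℝ (Fin 3 → ℝ)) x := by
    have h2 := ((hasFDerivAt_const t x : HasFDerivAt (fun _ : Fin 3 → ℝ => t) (0 : (Fin 3 → ℝ) →L[ℝ] ℝ) x)).prodMk (hasFDerivAt_id x)
    exact h2
  exact hf.hasFDerivAt.comp x h

lemma xslice_diff (hf : DifferentiableAt ℝ f (t, x)) :
    DifferentiableAt ℝ (fun y => f (t, y)) x := (xslice_hasFDerivAt hf).differentiableAt

lemma xslice_fderiv (hf : DifferentiableAt ℝ f (t, x)) (v : Fin 3 → ℝ) :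
    fderiv ℝ (fun y => f (t, y)) x v = fderiv ℝ f (t, x) (0, v) := by
  rw [(xslice_hasFDerivAt hf).fderiv]; rfl

lemma hC1 (hf : ContDiff ℝ 2 f) (u : ℝ × (Fin 3 → ℝ)) :
    ContDiff ℝ 1 (fun p => fderiv ℝ f p u) :=
  (hf.fderiv_right (by norm_num)).clm_apply contDiff_const

lemma fderiv2_apply (hf : ContDiff ℝ 2 f) (q u w : ℝ × (Fin 3 → ℝ)) :
    fderiv ℝ (fun p => fderiv ℝ f p u) q w = fderiv ℝ (fderiv ℝ f) q w u := by
  rw [fderiv_clm_apply ((hf.fderiv_right (m := 1) (by norm_num)).differentiable one_ne_zero q)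
    (differentiableAt_const u)]
  simp

lemma symm2 (hf : ContDiff ℝ 2 f) (q u w : ℝ × (Fin 3 → ℝ)) :
    fderiv ℝ (fderiv ℝ f) q u w = fderiv ℝ (fderiv ℝ f) q w u :=
  (hf.contDiffAt.isSymmSndFDerivAt (by norm_num)) u w

lemma pxt_fun_eq (hf : Differentiable ℝ f) (v : Fin 3 → ℝ) :
    (fun s => fderiv ℝ (fun y => f (s, y)) x v) = fun s => fderiv ℝ f (s, x) (0, v) :=
  funext fun s => xslice_fderiv (hf _) v

lemma diff_tx (hf : ContDiff ℝ 2 f) (v : Fin 3 → ℝ) :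
    DifferentiableAt ℝ (fun s => fderiv ℝ (fun y => f (s, y)) x v) t := by
  rw [pxt_fun_eq (hf.differentiable two_ne_zero) v]
  exact tslice_diff (((hC1 hf (0, v)).differentiable one_ne_zero) _)

lemma diff_xx (hf : ContDiff ℝ 2 f) (u : Fin 3 → ℝ) :
    DifferentiableAt ℝ (fun y => fderiv ℝ (fun z => f (t, z)) y u) x := by
  have h : (fun y => fderiv ℝ (fun z => f (t, z)) y u) = fun y => fderiv ℝ f (t, y) (0, u) :=
    funext fun y => xslice_fderiv (hf.differentiable two_ne_zero _) u
  rw [h]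
  exact xslice_diff (((hC1 hf (0, u)).differentiable one_ne_zero) _)

lemma mixed_tx (hf : ContDiff ℝ 2 f) (v : Fin 3 → ℝ) :
    deriv (fun s => fderiv ℝ (fun y => f (s, y)) x v) t =
      fderiv ℝ (fun y => deriv (fun s => f (s, y)) t) x v := by
  have hd : Differentiable ℝ f := hf.differentiable two_ne_zero
  have hL : deriv (fun s => fderiv ℝ (fun y => f (s, y)) x v) t
      = fderiv ℝ (fderiv ℝ f) (t, x) (1, 0) (0, v) := by
    rw [pxt_fun_eq hd v, tslice_deriv (((hC1 hf (0, v)).differentiable one_ne_zero) _),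
      fderiv2_apply hf]
  have hR : fderiv ℝ (fun y => deriv (fun s => f (s, y)) t) x v
      = fderiv ℝ (fderiv ℝ f) (t, x) (0, v) (1, 0) := by
    have h : (fun y => deriv (fun s => f (s, y)) t) = fun y => fderiv ℝ f (t, y) (1, 0) :=
      funext fun y => tslice_deriv (hd _)
    rw [h, xslice_fderiv (((hC1 hf (1, 0)).differentiable one_ne_zero) _) v, fderiv2_apply hf]
  rw [hL, hR, symm2 hf]

lemma M3' (hf : ContDiff ℝ 2 f) (u v : Fin 3 → ℝ) :
    fderiv ℝ (fun y => fderiv ℝ (fun z => f (t, z)) y u) x v =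
      fderiv ℝ (fderiv ℝ f) (t, x) (0, v) (0, u) := by
  have h : (fun y => fderiv ℝ (fun z => f (t, z)) y u) = fun y => fderiv ℝ f (t, y) (0, u) :=
    funext fun y => xslice_fderiv (hf.differentiable two_ne_zero _) u
  rw [h, xslice_fderiv (((hC1 hf (0, u)).differentiable one_ne_zero) _) v, fderiv2_apply hf]

end PHMhelp

/-- In the PHM system, the electric correction potential `φ` satisfies the
inhomogeneous wave equation `∂_{tt} φ − χ²c² Δφ = (χ/ε₀)(∂_t ρ + div J)`:
charge–current inconsistencies act as the source of waves in `φ` propagating at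
speed `χc`, and if charge is conserved then `φ` satisfies the homogeneous wave
equation with speed `χc`. -/
theorem phm_phi_wave_equation (ε₀ c χ : ℝ) (hε₀ : 0 < ε₀) (hc : 0 < c) (hχ : 0 < χ)
    (E B : ℝ × (Fin 3 → ℝ) → Fin 3 → ℝ) (φ : ℝ × (Fin 3 → ℝ) → ℝ)
    (ρ : ℝ × (Fin 3 → ℝ) → ℝ) (J : ℝ × (Fin 3 → ℝ) → Fin 3 → ℝ)
    (hE : ContDiff ℝ 2 E) (hB : ContDiff ℝ 2 B) (hφ : ContDiff ℝ 2 φ)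
    (hρ : ContDiff ℝ 1 ρ) (hJ : ContDiff ℝ 1 J)
    (hAmpere : ∀ (t : ℝ) (x : Fin 3 → ℝ) (i : Fin 3),
      deriv (fun s => E (s, x) i) t =
        c ^ 2 * scurl B t x i - χ * c ^ 2 * sgrad φ t x i - J (t, x) i / ε₀)
    (hGauss : ∀ (t : ℝ) (x : Fin 3 → ℝ),
      (1 / χ) * deriv (fun s => φ (s, x)) t = ρ (t, x) / ε₀ - sdiv E t x) :
    ∀ (t : ℝ) (x : Fin 3 → ℝ),
      deriv (fun s => deriv (fun r => φ (r, x)) s) t - χ ^ 2 * c ^ 2 * slap φ t x =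
        (χ / ε₀) * (deriv (fun s => ρ (s, x)) t + sdiv J t x) := by
  intro t x
  have hχ0 : χ ≠ 0 := hχ.ne'
  have hEc : ∀ i, ContDiff ℝ 2 (fun p => E p i) := fun i => contDiff_pi.mp hE i
  have hBc : ∀ i, ContDiff ℝ 2 (fun p => B p i) := fun i => contDiff_pi.mp hB i
  have hJc : ∀ i, ContDiff ℝ 1 (fun p => J p i) := fun i => contDiff_pi.mp hJ i
  -- Gauss rearranged
  have hG' : ∀ (s : ℝ) (y : Fin 3 → ℝ),
      deriv (fun r => φ (r, y)) s = χ * (ρ (s, y) / ε₀ - sdiv E s y) := by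
    intro s y
    calc deriv (fun r => φ (r, y)) s
        = χ * ((1 / χ) * deriv (fun r => φ (r, y)) s) := by field_simp
      _ = χ * (ρ (s, y) / ε₀ - sdiv E s y) := by rw [hGauss]
  -- differentiability of s ↦ div E (s, x)
  have hdivE_diff : ∀ t' : ℝ, DifferentiableAt ℝ (fun s => sdiv E s x) t' := by
    intro t'
    simp only [sdiv, spd]
    exact DifferentiableAt.fun_sum fun j _ => diff_tx (hEc j) _
  -- key : time derivative of div E
  have hkey : deriv (fun s => sdiv E s x) t
      = -(χ * c ^ 2 * slap φ t x) - sdiv J t x / ε₀ := by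
    have h1 : deriv (fun s => sdiv E s x) t = ∑ j : Fin 3, deriv (fun s => spd E j s x j) t := by
      simp only [sdiv]
      exact deriv_fun_sum fun j _ => by simp only [spd]; exact diff_tx (hEc j) _
    have h2 : ∀ j : Fin 3, deriv (fun s => spd E j s x j) t
        = c ^ 2 * fderiv ℝ (fun y => scurl B t y j) x (Pi.single j 1)
          - χ * c ^ 2 * fderiv ℝ (fun y => sgrad φ t y j) x (Pi.single j 1)
          - fderiv ℝ (fun y => J (t, y) j) x (Pi.single j 1) / ε₀ := by
      intro j
      have hmix : deriv (fun s => spd E j s x j) t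
          = fderiv ℝ (fun y => deriv (fun s => E (s, y) j) t) x (Pi.single j 1) := by
        simp only [spd]; exact mixed_tx (hEc j) _
      have hfun : (fun y => deriv (fun s => E (s, y) j) t)
          = fun y => c ^ 2 * scurl B t y j - χ * c ^ 2 * sgrad φ t y j - J (t, y) j / ε₀ :=
        funext fun y => hAmpere t y j
      have hdcurl : DifferentiableAt ℝ (fun y => scurl B t y j) x := by
        fin_cases j <;>
          · simp only [scurl, Matrix.cons_val_zero, Matrix.cons_val_one, Matrix.head_cons,
              Matrix.cons_val_two, Matrix.tail_cons, spd]
            exact (diff_xx (hBc _) _).sub (diff_xx (hBc _) _)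
      have hdgrad : DifferentiableAt ℝ (fun y => sgrad φ t y j) x := by
        simp only [sgrad]; exact diff_xx hφ _
      have hdJ : DifferentiableAt ℝ (fun y => J (t, y) j) x :=
        xslice_diff (((hJc j).differentiable one_ne_zero) _)
      rw [hmix, hfun]
      simp only [div_eq_mul_inv]
      rw [fderiv_fun_sub ((hdcurl.const_mul _).fun_sub (hdgrad.const_mul _)) (hdJ.mul_const _),
        fderiv_fun_sub (hdcurl.const_mul _) (hdgrad.const_mul _),
        fderiv_const_mul hdcurl, fderiv_const_mul hdgrad, fderiv_mul_const hdJ]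
      simp only [ContinuousLinearMap.sub_apply, ContinuousLinearMap.smul_apply, smul_eq_mul]
      ring
    have hcurl0 : (∑ j : Fin 3, fderiv ℝ (fun y => scurl B t y j) x (Pi.single j 1)) = 0 := by
      have hd : ∀ a i : Fin 3, DifferentiableAt ℝ (fun y => spd B a t y i) x := by
        intro a i; simp only [spd]; exact diff_xx (hBc i) _
      have hv : ∀ a b i : Fin 3, fderiv ℝ (fun y => spd B a t y i) x (Pi.single b 1)
          = fderiv ℝ (fderiv ℝ (fun p => B p i)) (t, x) (0, Pi.single b 1) (0, Pi.single a 1) := by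
        intro a b i; simp only [spd]; exact M3' (hBc i) _ _
      rw [Fin.sum_univ_three]
      simp only [scurl, Matrix.cons_val_zero, Matrix.cons_val_one, Matrix.head_cons,
        Matrix.cons_val_two, Matrix.tail_cons]
      rw [fderiv_fun_sub (hd 1 2) (hd 2 1), fderiv_fun_sub (hd 2 0) (hd 0 2), fderiv_fun_sub (hd 0 1) (hd 1 0)]
      simp only [ContinuousLinearMap.sub_apply]
      rw [hv 1 0 2, hv 2 0 1, hv 2 1 0, hv 0 1 2, hv 0 2 1, hv 1 2 0,
        symm2 (hBc 2) (t, x) (0, Pi.single 0 1) (0, Pi.single 1 1),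
        symm2 (hBc 1) (t, x) (0, Pi.single 0 1) (0, Pi.single 2 1),
        symm2 (hBc 0) (t, x) (0, Pi.single 1 1) (0, Pi.single 2 1)]
      ring
    have hslap : (∑ j : Fin 3, fderiv ℝ (fun y => sgrad φ t y j) x (Pi.single j 1))
        = slap φ t x := rfl
    have hsdivJ : (∑ j : Fin 3, fderiv ℝ (fun y => J (t, y) j) x (Pi.single j 1))
        = sdiv J t x := rfl
    rw [h1, Finset.sum_congr rfl fun j _ => h2 j]
    rw [Finset.sum_sub_distrib, Finset.sum_sub_distrib, ← Finset.mul_sum, ← Finset.mul_sum,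
      ← Finset.sum_div, hcurl0, hslap, hsdivJ]
    ring
  -- assemble
  have hdρ : DifferentiableAt ℝ (fun s => ρ (s, x)) t :=
    tslice_diff ((hρ.differentiable one_ne_zero) _)
  have hstep : deriv (fun s => deriv (fun r => φ (r, x)) s) t
      = χ * (deriv (fun s => ρ (s, x)) t / ε₀ - deriv (fun s => sdiv E s x) t) := by
    have hfun : (fun s => deriv (fun r => φ (r, x)) s)
        = fun s => χ * (ρ (s, x) / ε₀ - sdiv E s x) := funext fun s => hG' s x
    rw [hfun, deriv_const_mul _ ((hdρ.div_const _).fun_sub (hdivE_diff t)),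
      deriv_fun_sub (hdρ.div_const _) (hdivE_diff t), deriv_div_const]
  rw [hstep, hkey]
  ring
end
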